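/- For every real x and integer N ≥ 2, 1 ≤ (1+e^x)(Σ_{k=0}^{N-2} e^{kx}) / (Σ_{k=0}^{N-1} e^{kx}) ≤ 2(N-1)/N. -/

import Mathlib

private lemma pair_le (t : ℝ) (ht : 0 ≤ t) (k m : ℕ) (hk : k ≤ m) :
    t ^ k + t ^ (m - k) ≤ 1 + t ^ m := by
  have hmul : t ^ k * t ^ (m - k) = t ^ m := by
    rw [← pow_add]; congr 1; omega
  rcases le_total t 1 with h | h
  · nlinarith [pow_le_one₀ ht h (n := k), pow_le_one₀ ht h (n := m - k)]
  · nlinarith [one_le_pow₀ h (n := k), one_le_pow₀ h (n := m - k)]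

theorem w_factor_bounds (x : ℝ) (N : ℕ) (hN : 2 ≤ N) :
    1 ≤ (1 + Real.exp x) * (∑ k ∈ Finset.range (N - 1), Real.exp (k * x)) /
          (∑ k ∈ Finset.range N, Real.exp (k * x)) ∧
    (1 + Real.exp x) * (∑ k ∈ Finset.range (N - 1), Real.exp (k * x)) /
          (∑ k ∈ Finset.range N, Real.exp (k * x)) ≤ 2 * ((N : ℝ) - 1) / N := by
  obtain ⟨q, rfl⟩ : ∃ q, N = q + 2 := ⟨N - 2, by omega⟩
  set t := Real.exp x with htdef
  have ht : 0 < t := Real.exp_pos x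
  have hsum : ∀ m : ℕ, ∑ k ∈ Finset.range m, Real.exp (k * x)
      = ∑ k ∈ Finset.range m, t ^ k := by
    intro m
    refine Finset.sum_congr rfl fun k _ => ?_
    rw [htdef, ← Real.exp_nat_mul]
  have hpos : ∀ m : ℕ, 0 < ∑ k ∈ Finset.range (m + 1), t ^ k :=
    fun m => Finset.sum_pos (fun k _ => pow_pos ht k) ⟨0, Finset.mem_range.2 (by omega)⟩
  simp only [show q + 2 - 1 = q + 1 from rfl, hsum]
  set S1 : ℝ := ∑ k ∈ Finset.range (q + 1), t ^ k with hS1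
  have hS2 : ∑ k ∈ Finset.range (q + 2), t ^ k = S1 + t ^ (q + 1) :=
    Finset.sum_range_succ _ _
  have hS1pos : 0 < S1 := hpos q
  have hS2pos : 0 < ∑ k ∈ Finset.range (q + 2), t ^ k := hpos (q + 1)
  have htS : t * S1 = S1 + t ^ (q + 1) - 1 := by
    have := geom_sum_mul t (q + 1)
    rw [← hS1] at this
    nlinarith [this]
  constructor
  · rw [le_div_iff₀ hS2pos, one_mul, hS2]
    have hSq : t ^ q ≤ S1 := by
      rw [hS1, Finset.sum_range_succ]
      have : 0 ≤ ∑ k ∈ Finset.range q, t ^ k :=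
        Finset.sum_nonneg fun k _ => (pow_pos ht k).le
      linarith
    have : t ^ (q + 1) ≤ t * S1 := by
      calc t ^ (q + 1) = t * t ^ q := by ring
        _ ≤ t * S1 := by nlinarith
    nlinarith
  · have hNpos : (0 : ℝ) < ((q : ℝ) + 2) := by positivity
    have hcast : ((q + 2 : ℕ) : ℝ) = (q : ℝ) + 2 := by push_cast; ring
    rw [hcast, div_le_div_iff₀ hS2pos hNpos, hS2]
    -- key inequality: 2 * S1 ≤ q * (t^(q+1) + 1) + 2
    have key : 2 * S1 ≤ (q : ℝ) * (t ^ (q + 1) + 1) + 2 := by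
      have hsplit : S1 = (∑ j ∈ Finset.range q, t ^ (j + 1)) + 1 := by
        rw [hS1, Finset.sum_range_succ']; norm_num
      have hrefl : ∑ j ∈ Finset.range q, t ^ (q - j)
          = ∑ j ∈ Finset.range q, t ^ (j + 1) := by
        rw [← Finset.sum_range_reflect (fun j => t ^ (j + 1)) q]
        refine Finset.sum_congr rfl fun j hj => ?_
        have := Finset.mem_range.1 hj
        congr 1; omega
      have hbound : ∑ j ∈ Finset.range q, (t ^ (j + 1) + t ^ (q - j))
          ≤ ∑ j ∈ Finset.range q, (1 + t ^ (q + 1)) := by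
        refine Finset.sum_le_sum fun j hj => ?_
        have hjq := Finset.mem_range.1 hj
        have := pair_le t ht.le (j + 1) (q + 1) (by omega)
        have hidx : (q + 1) - (j + 1) = q - j := by omega
        rw [hidx] at this
        exact this
      rw [Finset.sum_add_distrib, hrefl, Finset.sum_const, Finset.card_range,
        nsmul_eq_mul] at hbound
      rw [hsplit]
      linarith
    nlinarith [key, htS]
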